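/- Let M be a rank-d matroid on {1,…,m} with {1,…,d} a basis. If the reduced realization space R^R_ℂ(M) is path connected, then the realization space R_ℂ(M) is path connected. -/

import Mathlib

set_option maxHeartbeats 1000000

/-- `A` realizes the matroid `M` over `ℂ` (ground set `{1,…,m}` encoded as
`Fin d ⊕ Fin (m-d)`, where the left summand plays the role of `{1,…,d}`):
column subsets of `A` are linearly independent exactly when independent in `M`. -/
def Realizes {d k : ℕ} (M : Matroid (Fin d ⊕ Fin k))
    (A : Matrix (Fin d) (Fin d ⊕ Fin k) ℂ) : Prop :=
  M.E = Set.univ ∧ ∀ J : Set (Fin d ⊕ Fin k),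
    M.Indep J ↔ LinearIndependent ℂ (fun j : J => fun i => A i (j : Fin d ⊕ Fin k))

/-- `(i,j)` is the position of the topmost nonzero entry of column `j` of `Q`
(the first marking step in the construction of the normal frame). -/
def Topmost {n r : ℕ} (Q : Matrix (Fin n) (Fin r) ℂ) (i : Fin n) (j : Fin r) : Prop :=
  Q i j ≠ 0 ∧ ∀ i' : Fin n, i' < i → Q i' j = 0

/-- `(i,j)` is the position of the leftmost nonzero entry of row `i` of `Q` that was not
marked in the first step (the second marking step). -/
def LeftNew {n r : ℕ} (Q : Matrix (Fin n) (Fin r) ℂ) (i : Fin n) (j : Fin r) : Prop :=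
  Q i j ≠ 0 ∧ ¬ Topmost Q i j ∧ ∀ j' : Fin r, j' < j → (Q i j' = 0 ∨ Topmost Q i j')

/-- The normal frame of `Q`: the set of all positions marked in either step. -/
def NormalFrame {n r : ℕ} (Q : Matrix (Fin n) (Fin r) ℂ) : Set (Fin n × Fin r) :=
  {p | Topmost Q p.1 p.2 ∨ LeftNew Q p.1 p.2}

namespace FrameAux

variable {n r : ℕ} {Q : Matrix (Fin n) (Fin r) ℂ}

theorem topmost_unique {i i' : Fin n} {j : Fin r} (h : Topmost Q i j) (h' : Topmost Q i' j) :
    i = i' := by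
  rcases lt_trichotomy i i' with hlt | he | hlt
  · exact absurd (h'.2 i hlt) h.1
  · exact he
  · exact absurd (h.2 i' hlt) h'.1

theorem leftNew_unique {i : Fin n} {j j' : Fin r} (h : LeftNew Q i j) (h' : LeftNew Q i j') :
    j = j' := by
  rcases lt_trichotomy j j' with hlt | he | hlt
  · rcases h'.2.2 j hlt with h0 | ht
    · exact absurd h0 h.1
    · exact absurd ht h.2.1
  · exact he
  · rcases h.2.2 j' hlt with h0 | ht
    · exact absurd h0 h'.1
    · exact absurd ht h'.2.1

theorem exists_topmost {j : Fin r} (h : ∃ i, Q i j ≠ 0) : ∃ i, Topmost Q i j := by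
  classical
  set s := Finset.univ.filter (fun i => Q i j ≠ 0) with hs
  have hne : s.Nonempty := by
    obtain ⟨i, hi⟩ := h
    exact ⟨i, by simp [hs, hi]⟩
  refine ⟨s.min' hne, ?_, ?_⟩
  · have := s.min'_mem hne
    simpa [hs] using this
  · intro i' hi'
    by_contra h0
    have : s.min' hne ≤ i' := s.min'_le i' (by simp [hs, h0])
    exact absurd (lt_of_le_of_lt this hi') (lt_irrefl _)

theorem exists_topmost_of_leftNew {i : Fin n} {j : Fin r} (h : LeftNew Q i j) :
    ∃ i', Topmost Q i' j := exists_topmost ⟨i, h.1⟩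

theorem topmost_lt_of_leftNew {i i' : Fin n} {j : Fin r} (h : LeftNew Q i j)
    (ht : Topmost Q i' j) : i' < i := by
  rcases lt_trichotomy i' i with hlt | he | hlt
  · exact hlt
  · exact absurd (he ▸ ht) h.2.1
  · have : ¬ (∀ i'' : Fin n, i'' < i → Q i'' j = 0) := fun hall => h.2.1 ⟨h.1, hall⟩
    push_neg at this
    obtain ⟨i'', hi''lt, hi''ne⟩ := this
    exact absurd (ht.2 i'' (hi''lt.trans hlt)) hi''ne

open Classical in
noncomputable def rowScale (Q : Matrix (Fin n) (Fin r) ℂ) : Fin n → ℂ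
  | i =>
    if h : ∃ j, LeftNew Q i j then
      let j := h.choose
      have hln : LeftNew Q i j := h.choose_spec
      have ht : ∃ i', Topmost Q i' j := exists_topmost_of_leftNew hln
      let i' := ht.choose
      have hlt : i' < i := topmost_lt_of_leftNew hln ht.choose_spec
      (Q i' j / Q i j) * rowScale Q i'
    else 1
  termination_by i => i.1

open Classical in
theorem rowScale_eq (Q : Matrix (Fin n) (Fin r) ℂ) (i : Fin n) :
    rowScale Q i = if h : ∃ j, LeftNew Q i j then
      (Q (exists_topmost_of_leftNew h.choose_spec).choose h.choose / Q i h.choose) *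
        rowScale Q (exists_topmost_of_leftNew h.choose_spec).choose
    else 1 := by
  rw [rowScale]

theorem rowScale_eq_of_leftNew {i i' : Fin n} {j : Fin r} (h : LeftNew Q i j)
    (ht : Topmost Q i' j) :
    rowScale Q i = (Q i' j / Q i j) * rowScale Q i' := by
  rw [rowScale_eq]
  have he : ∃ j, LeftNew Q i j := ⟨j, h⟩
  rw [dif_pos he]
  have hj : he.choose = j := leftNew_unique he.choose_spec h
  have hi' : (exists_topmost_of_leftNew he.choose_spec).choose = i' := by
    exact topmost_unique (exists_topmost_of_leftNew he.choose_spec).choose_spec (hj ▸ ht)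
  rw [hi', hj]

theorem rowScale_eq_one {i : Fin n} (h : ¬ ∃ j, LeftNew Q i j) : rowScale Q i = 1 := by
  rw [rowScale_eq, dif_neg h]

theorem rowScale_ne_zero (Q : Matrix (Fin n) (Fin r) ℂ) (i : Fin n) : rowScale Q i ≠ 0 := by
  have key : ∀ m : ℕ, ∀ i : Fin n, i.1 < m → rowScale Q i ≠ 0 := by
    intro m
    induction m with
    | zero => intro i h; omega
    | succ m ih =>
      intro i hi
      by_cases h : ∃ j, LeftNew Q i j
      · obtain ⟨j, hln⟩ := h
        obtain ⟨i', ht⟩ := exists_topmost_of_leftNew hln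
        rw [rowScale_eq_of_leftNew hln ht]
        have hlt : i'.1 < m := by
          have := topmost_lt_of_leftNew hln ht
          omega
        exact mul_ne_zero (div_ne_zero ht.1 hln.1) (ih i' hlt)
      · rw [rowScale_eq_one h]; exact one_ne_zero
  exact key (i.1 + 1) i (by omega)

open Classical in
noncomputable def colScale (Q : Matrix (Fin n) (Fin r) ℂ) (j : Fin r) : ℂ :=
  if h : ∃ i, Topmost Q i j then (rowScale Q h.choose * Q h.choose j)⁻¹ else 1

theorem colScale_eq_of_topmost {i : Fin n} {j : Fin r} (h : Topmost Q i j) :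
    colScale Q j = (rowScale Q i * Q i j)⁻¹ := by
  rw [colScale, dif_pos ⟨i, h⟩]
  congr 2 <;> rw [topmost_unique (Exists.choose_spec (⟨i, h⟩ : ∃ i, Topmost Q i j)) h]

theorem colScale_ne_zero (Q : Matrix (Fin n) (Fin r) ℂ) (j : Fin r) : colScale Q j ≠ 0 := by
  rw [colScale]
  split_ifs with h
  · exact inv_ne_zero (mul_ne_zero (rowScale_ne_zero Q _) h.choose_spec.1)
  · exact one_ne_zero

theorem frame_entry {i : Fin n} {j : Fin r} (h : Topmost Q i j ∨ LeftNew Q i j) :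
    rowScale Q i * Q i j * colScale Q j = 1 := by
  rcases h with h | h
  · rw [colScale_eq_of_topmost h]
    exact mul_inv_cancel₀ (mul_ne_zero (rowScale_ne_zero Q i) h.1)
  · obtain ⟨i', ht⟩ := exists_topmost_of_leftNew h
    have h1 := ht.1
    have h2 := h.1
    have h3 := rowScale_ne_zero Q i'
    rw [rowScale_eq_of_leftNew h ht, colScale_eq_of_topmost ht]
    field_simp

variable {rv : Fin n → ℂ} {cv : Fin r → ℂ}

theorem scaled_eq_zero_iff (hr : ∀ i, rv i ≠ 0) (hc : ∀ j, cv j ≠ 0) (i : Fin n) (j : Fin r) :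
    rv i * Q i j * cv j = 0 ↔ Q i j = 0 := by
  constructor
  · intro h
    rcases mul_eq_zero.mp h with h | h
    · rcases mul_eq_zero.mp h with h | h
      · exact absurd h (hr i)
      · exact h
    · exact absurd h (hc j)
  · intro h; rw [h, mul_zero, zero_mul]

theorem topmost_scaled_iff (hr : ∀ i, rv i ≠ 0) (hc : ∀ j, cv j ≠ 0) (i : Fin n) (j : Fin r) :
    Topmost (Matrix.of fun i j => rv i * Q i j * cv j) i j ↔ Topmost Q i j := by
  unfold Topmost
  simp only [Matrix.of_apply]
  constructor
  · rintro ⟨h1, h2⟩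
    exact ⟨fun h0 => h1 (by rw [h0, mul_zero, zero_mul]),
      fun i' hi' => (scaled_eq_zero_iff hr hc i' j).mp (h2 i' hi')⟩
  · rintro ⟨h1, h2⟩
    exact ⟨fun h0 => h1 ((scaled_eq_zero_iff hr hc i j).mp h0),
      fun i' hi' => by rw [h2 i' hi', mul_zero, zero_mul]⟩

theorem leftNew_scaled_iff (hr : ∀ i, rv i ≠ 0) (hc : ∀ j, cv j ≠ 0) (i : Fin n) (j : Fin r) :
    LeftNew (Matrix.of fun i j => rv i * Q i j * cv j) i j ↔ LeftNew Q i j := by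
  unfold LeftNew
  simp only [Matrix.of_apply]
  constructor
  · rintro ⟨h1, h2, h3⟩
    refine ⟨fun h0 => h1 (by rw [h0, mul_zero, zero_mul]),
      fun ht => h2 ((topmost_scaled_iff hr hc i j).mpr ht), fun j' hj' => ?_⟩
    rcases h3 j' hj' with h0 | ht
    · exact Or.inl ((scaled_eq_zero_iff hr hc i j').mp h0)
    · exact Or.inr ((topmost_scaled_iff hr hc i j').mp ht)
  · rintro ⟨h1, h2, h3⟩
    refine ⟨fun h0 => h1 ((scaled_eq_zero_iff hr hc i j).mp h0),
      fun ht => h2 ((topmost_scaled_iff hr hc i j).mp ht), fun j' hj' => ?_⟩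
    rcases h3 j' hj' with h0 | ht
    · exact Or.inl (by rw [h0, mul_zero, zero_mul])
    · exact Or.inr ((topmost_scaled_iff hr hc i j').mpr ht)

theorem scaled_frame (Q : Matrix (Fin n) (Fin r) ℂ) :
    ∀ p ∈ NormalFrame (Matrix.of fun i j => rowScale Q i * Q i j * colScale Q j),
      (Matrix.of fun i j => rowScale Q i * Q i j * colScale Q j) p.1 p.2 = 1 := by
  intro p hp
  have hr := rowScale_ne_zero Q
  have hc := colScale_ne_zero Q
  rcases hp with h | h
  · exact frame_entry (Or.inl ((topmost_scaled_iff hr hc _ _).mp h))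
  · exact frame_entry (Or.inr ((leftNew_scaled_iff hr hc _ _).mp h))

theorem linearIndependent_units_smul_iff {ι V : Type*} [AddCommGroup V] [Module ℂ V]
    (v : ι → V) (w : ι → ℂˣ) :
    LinearIndependent ℂ (fun j => w j • v j) ↔ LinearIndependent ℂ v := by
  constructor
  · intro h
    have h1 := h.units_smul w⁻¹
    have h2 : (w⁻¹ • fun j => w j • v j) = v := by
      funext j
      simp only [Pi.smul_apply', Pi.inv_apply]
      exact inv_smul_smul (w j) (v j)
    rwa [h2] at h1
  · intro h
    have h1 := h.units_smul w
    have h2 : (w • v) = fun j => w j • v j := funext fun j => rfl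
    rwa [h2] at h1

variable {d k : ℕ} {M : Matroid (Fin d ⊕ Fin k)} {A : Matrix (Fin d) (Fin d ⊕ Fin k) ℂ}

theorem realizes_mul_left (h : Realizes M A) {P : Matrix (Fin d) (Fin d) ℂ} (hP : IsUnit P) :
    Realizes M (P * A) := by
  refine ⟨h.1, fun J => (h.2 J).trans ?_⟩
  have hinj : Function.Injective P.mulVec := Matrix.mulVec_injective_iff_isUnit.mpr hP
  have hker : LinearMap.ker P.mulVecLin = ⊥ :=
    LinearMap.ker_eq_bot.mpr (by rw [Matrix.coe_mulVecLin]; exact hinj)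
  have heq : (fun j : J => fun i => (P * A) i (j : Fin d ⊕ Fin k)) =
      ⇑P.mulVecLin ∘ (fun j : J => fun i => A i (j : Fin d ⊕ Fin k)) := by
    funext j
    ext i
    simp [Matrix.mulVecLin, Matrix.mul_apply, Matrix.mulVec, dotProduct]
  rw [heq, LinearMap.linearIndependent_iff P.mulVecLin hker]

theorem realizes_scale (h : Realizes M A) {e : Fin d ⊕ Fin k → ℂ} (he : ∀ x, e x ≠ 0) :
    Realizes M (fun i x => A i x * e x) := by
  refine ⟨h.1, fun J => (h.2 J).trans ?_⟩
  have heq : (fun j : J => fun i => A i (j : Fin d ⊕ Fin k) * e (j : Fin d ⊕ Fin k)) =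
      fun j : J => (Units.mk0 (e (j : Fin d ⊕ Fin k)) (he _)) •
        (fun i => A i (j : Fin d ⊕ Fin k)) := by
    funext j; ext i
    simp [Units.smul_def, mul_comm]
  rw [heq, linearIndependent_units_smul_iff]

open Polynomial in
theorem joinedIn_mul_left (h : Realizes M A) {P : Matrix (Fin d) (Fin d) ℂ} (hP : IsUnit P) :
    JoinedIn {B : Matrix (Fin d) (Fin d ⊕ Fin k) ℂ | Realizes M B} A (P * A) := by
  classical
  set N : ℂ → Matrix (Fin d) (Fin d) ℂ := fun z => (1 - z) • (1 : Matrix (Fin d) (Fin d) ℂ) + z • P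
    with hN
  set p : ℂ[X] :=
    (Matrix.of fun i j => (1 - X) * C ((1 : Matrix (Fin d) (Fin d) ℂ) i j) + X * C (P i j)).det
    with hp
  have hev : ∀ z : ℂ, p.eval z = (N z).det := by
    intro z
    rw [hp, ← Polynomial.coe_evalRingHom, RingHom.map_det]
    congr 1
    ext i j
    simp only [hN, RingHom.mapMatrix_apply, Matrix.map_apply, Matrix.of_apply,
      Polynomial.coe_evalRingHom, Polynomial.eval_add, Polynomial.eval_mul,
      Polynomial.eval_sub, Polynomial.eval_one, Polynomial.eval_X, Polynomial.eval_C,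
      Matrix.add_apply, Matrix.smul_apply, smul_eq_mul]
  have hNz : N 0 = 1 := by
    rw [hN]
    show (1 - (0:ℂ)) • (1 : Matrix (Fin d) (Fin d) ℂ) + (0:ℂ) • P = 1
    rw [sub_zero, one_smul, zero_smul, add_zero]
  have hNo : N 1 = P := by
    rw [hN]
    show (1 - (1:ℂ)) • (1 : Matrix (Fin d) (Fin d) ℂ) + (1:ℂ) • P = P
    rw [sub_self, zero_smul, one_smul, zero_add]
  have h0 : p.eval 0 ≠ 0 := by
    rw [hev, hNz, Matrix.det_one]; exact one_ne_zero
  have h1 : p.eval 1 ≠ 0 := by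
    rw [hev, hNo]
    exact ((Matrix.isUnit_iff_isUnit_det P).mp hP).ne_zero
  have hp0 : p ≠ 0 := fun hh => h1 (by simp [hh])
  have hpc : IsPathConnected {z : ℂ | p.IsRoot z}ᶜ := by
    refine Set.Countable.isPathConnected_compl_of_one_lt_rank ?_
      (Polynomial.finite_setOf_isRoot hp0).countable
    rw [Complex.rank_real_complex]; norm_num
  have hjz : JoinedIn {z : ℂ | p.IsRoot z}ᶜ 0 1 :=
    hpc.joinedIn 0 (by simp [Polynomial.IsRoot, h0]) 1 (by simp [Polynomial.IsRoot, h1])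
  obtain ⟨γ, hγ⟩ := hjz
  have hcont : Continuous fun t : unitInterval => N (γ t) * A := by
    refine Continuous.matrix_mul ?_ continuous_const
    have : Continuous fun t : unitInterval => (γ t : ℂ) := γ.continuous
    exact ((continuous_const.sub this).smul continuous_const).add (this.smul continuous_const)
  have hN0 : N (γ 0) * A = A := by
    have : (γ 0 : ℂ) = 0 := by simp
    rw [this, hNz, Matrix.one_mul]
  have hN1 : N (γ 1) * A = P * A := by
    have : (γ 1 : ℂ) = 1 := by simp
    rw [this, hNo]
  refine ⟨⟨⟨fun t => N (γ t) * A, hcont⟩, hN0, hN1⟩, ?_⟩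
  intro t
  show Realizes M (N (γ t) * A)
  refine realizes_mul_left h ?_
  rw [Matrix.isUnit_iff_isUnit_det, isUnit_iff_ne_zero, ← hev]
  exact hγ t

theorem joinedIn_scale (h : Realizes M A) {e : Fin d ⊕ Fin k → ℂ} (he : ∀ x, e x ≠ 0) :
    JoinedIn {B : Matrix (Fin d) (Fin d ⊕ Fin k) ℂ | Realizes M B} A (fun i x => A i x * e x) := by
  have hpc : IsPathConnected ({0}ᶜ : Set ℂ) := by
    refine isPathConnected_compl_singleton_of_one_lt_rank ?_ 0
    rw [Complex.rank_real_complex]; norm_num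
  have hx : ∀ x : Fin d ⊕ Fin k, ∃ γ : Path (1 : ℂ) (e x), ∀ t, γ t ≠ 0 := by
    intro x
    obtain ⟨γ, hγ⟩ := hpc.joinedIn 1 (by simp) (e x) (by simp [he x])
    exact ⟨γ, fun t => hγ t⟩
  choose γ hγ using hx
  have hcont : Continuous fun t : unitInterval => fun i x => A i x * γ x t := by
    refine continuous_pi fun i => continuous_pi fun x => ?_
    exact continuous_const.mul (γ x).continuous
  have h0 : (fun i x => A i x * γ x 0) = A := by
    funext i x; rw [(γ x).source]; ring
  have h1 : (fun i x => A i x * γ x 1) = fun i x => A i x * e x := by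
    funext i x; rw [(γ x).target]
  refine ⟨⟨⟨fun t => fun i x => A i x * γ x t, hcont⟩, h0, h1⟩, ?_⟩
  intro t
  show Realizes M (fun i x => A i x * γ x t)
  exact realizes_scale h (fun x => hγ x t)

end FrameAux

/-- If the reduced realization space of `M` is path connected, then so is the
realization space of `M` (for `M` a matroid on `{1,…,m}` with `{1,…,d}` a basis). -/
theorem realization_pathConnected_of_reduced (d k : ℕ)
    (M : Matroid (Fin d ⊕ Fin k)) (hbase : M.IsBase (Set.range Sum.inl))
    (hred : IsPathConnected {A : Matrix (Fin d) (Fin d ⊕ Fin k) ℂ | Realizes M A ∧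
      ∃ At : Matrix (Fin d) (Fin k) ℂ, A = Matrix.fromCols 1 At ∧
        ∀ p ∈ NormalFrame At, At p.1 p.2 = 1}) :
    IsPathConnected {A : Matrix (Fin d) (Fin d ⊕ Fin k) ℂ | Realizes M A} := by
  classical
  obtain ⟨x₀, hx₀, hjoin⟩ := hred
  have hsub : {A : Matrix (Fin d) (Fin d ⊕ Fin k) ℂ | Realizes M A ∧
      ∃ At : Matrix (Fin d) (Fin k) ℂ, A = Matrix.fromCols 1 At ∧
        ∀ p ∈ NormalFrame At, At p.1 p.2 = 1} ⊆
      {A : Matrix (Fin d) (Fin d ⊕ Fin k) ℂ | Realizes M A} := fun _ h => h.1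
  refine ⟨x₀, hx₀.1, ?_⟩
  intro y hy
  have hy' : Realizes M y := hy
  -- the left d×d block of y is invertible
  set B : Matrix (Fin d) (Fin d) ℂ := Matrix.of fun i j => y i (Sum.inl j) with hBdef
  have hli : LinearIndependent ℂ
      (fun j : (Set.range (Sum.inl : Fin d → Fin d ⊕ Fin k)) =>
        fun i => y i (j : Fin d ⊕ Fin k)) :=
    (hy'.2 _).mp hbase.indep
  have hBunit : IsUnit B := by
    rw [← Matrix.linearIndependent_cols_iff_isUnit]
    have : B.col = (fun j : (Set.range (Sum.inl : Fin d → Fin d ⊕ Fin k)) =>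
        fun i => y i (j : Fin d ⊕ Fin k)) ∘ (fun j : Fin d =>
          (⟨Sum.inl j, Set.mem_range_self j⟩ : (Set.range (Sum.inl : Fin d → Fin d ⊕ Fin k)))) :=
      rfl
    rw [this]
    exact hli.comp _ (fun a b hab => Sum.inl_injective (congrArg Subtype.val hab))
  have hBdet : IsUnit B.det := (Matrix.isUnit_iff_isUnit_det B).mp hBunit
  have hBinv : IsUnit B⁻¹ := Matrix.isUnit_nonsing_inv_iff.mpr hBunit
  -- step 1 : y ⤳ B⁻¹ * y
  have step1 : JoinedIn {A : Matrix (Fin d) (Fin d ⊕ Fin k) ℂ | Realizes M A} y (B⁻¹ * y) :=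
    FrameAux.joinedIn_mul_left hy' hBinv
  set A₁ : Matrix (Fin d) (Fin d ⊕ Fin k) ℂ := B⁻¹ * y with hA₁def
  have hA₁ : Realizes M A₁ := FrameAux.realizes_mul_left hy' hBinv
  have hA₁inl : ∀ i jj, A₁ i (Sum.inl jj) = (1 : Matrix (Fin d) (Fin d) ℂ) i jj := by
    intro i jj
    have : A₁ i (Sum.inl jj) = (B⁻¹ * B) i jj := by
      rw [hA₁def, Matrix.mul_apply, Matrix.mul_apply]
      rfl
    rw [this, Matrix.nonsing_inv_mul B hBdet]
  set Q : Matrix (Fin d) (Fin k) ℂ := Matrix.of fun i j => A₁ i (Sum.inr j) with hQdef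
  set rv : Fin d → ℂ := FrameAux.rowScale Q with hrv
  set cv : Fin k → ℂ := FrameAux.colScale Q with hcv
  have hr : ∀ i, rv i ≠ 0 := FrameAux.rowScale_ne_zero Q
  have hc : ∀ j, cv j ≠ 0 := FrameAux.colScale_ne_zero Q
  set e : Fin d ⊕ Fin k → ℂ := Sum.elim (fun i => (rv i)⁻¹) cv with he_def
  have he : ∀ x, e x ≠ 0 := by
    rintro (i | j)
    · exact inv_ne_zero (hr i)
    · exact hc j
  -- step 2 : A₁ ⤳ A₁ * diag e  (columns scaled)
  have step2 : JoinedIn {A : Matrix (Fin d) (Fin d ⊕ Fin k) ℂ | Realizes M A}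
      A₁ (fun i x => A₁ i x * e x) := FrameAux.joinedIn_scale hA₁ he
  set A₁' : Matrix (Fin d) (Fin d ⊕ Fin k) ℂ := fun i x => A₁ i x * e x with hA₁'def
  have hA₁' : Realizes M A₁' := FrameAux.realizes_scale hA₁ he
  have hDr : IsUnit (Matrix.diagonal rv) := by
    rw [Matrix.isUnit_diagonal]
    exact ⟨⟨rv, fun i => (rv i)⁻¹, funext fun i => mul_inv_cancel₀ (hr i),
      funext fun i => inv_mul_cancel₀ (hr i)⟩, rfl⟩
  -- step 3 : A₁' ⤳ diag rv * A₁'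
  have step3 : JoinedIn {A : Matrix (Fin d) (Fin d ⊕ Fin k) ℂ | Realizes M A}
      A₁' (Matrix.diagonal rv * A₁') := FrameAux.joinedIn_mul_left hA₁' hDr
  set Q' : Matrix (Fin d) (Fin k) ℂ := Matrix.of fun i j => rv i * Q i j * cv j with hQ'def
  have hA₂eq : Matrix.diagonal rv * A₁' = Matrix.fromCols 1 Q' := by
    ext i x
    rw [Matrix.diagonal_mul]
    cases x with
    | inl j =>
      rw [Matrix.fromCols_apply_inl]
      have : A₁' i (Sum.inl j) = (1 : Matrix (Fin d) (Fin d) ℂ) i j * (rv j)⁻¹ := by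
        rw [hA₁'def]
        simp only [he_def, Sum.elim_inl, hA₁inl]
      rw [this]
      by_cases hij : i = j
      · subst hij
        rw [Matrix.one_apply_eq, one_mul, mul_inv_cancel₀ (hr i)]
      · rw [Matrix.one_apply_ne hij, zero_mul, mul_zero]
    | inr j =>
      rw [Matrix.fromCols_apply_inr]
      have : A₁' i (Sum.inr j) = Q i j * cv j := by
        rw [hA₁'def]
        simp only [he_def, Sum.elim_inr, hQdef, Matrix.of_apply]
      rw [this, hQ'def]
      simp only [Matrix.of_apply]
      ring
  have hA₂red : Matrix.fromCols 1 Q' ∈ {A : Matrix (Fin d) (Fin d ⊕ Fin k) ℂ | Realizes M A ∧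
      ∃ At : Matrix (Fin d) (Fin k) ℂ, A = Matrix.fromCols 1 At ∧
        ∀ p ∈ NormalFrame At, At p.1 p.2 = 1} := by
    refine ⟨?_, Q', rfl, ?_⟩
    · rw [← hA₂eq]
      exact FrameAux.realizes_mul_left hA₁' hDr
    · rw [hQ'def, hrv, hcv]
      exact FrameAux.scaled_frame Q
  -- assemble
  have hjy : JoinedIn {A : Matrix (Fin d) (Fin d ⊕ Fin k) ℂ | Realizes M A}
      y (Matrix.fromCols 1 Q') := by
    refine (step1.trans step2).trans ?_
    rw [← hA₂eq]
    exact step3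
  have hx₀A₂ : JoinedIn {A : Matrix (Fin d) (Fin d ⊕ Fin k) ℂ | Realizes M A}
      x₀ (Matrix.fromCols 1 Q') := (hjoin hA₂red).mono hsub
  exact hx₀A₂.trans hjy.symm
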